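/- Let E be a real inner product space, σ > 0, r ≥ 2, and let φ : E → ℝ be differentiable and (σ,r)-uniformly convex. Let η > 0, g ∈ E, and suppose w, u ∈ E satisfy ∇φ(u) = ∇φ(w) − η g. Then for every x ∈ E: D_φ(x, u) ≤ D_φ(x, w) − η⟨g, w − x⟩ + ((r−1)/r) · σ^{−1/(r−1)} · (η‖g‖)^{r/(r−1)}. -/

import Mathlib

open RealInnerProductSpace

lemma young_aux (σ r : ℝ) (hσ : 0 < σ) (hr : 2 ≤ r) (a t : ℝ) (ha : 0 ≤ a) (ht : 0 ≤ t) :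
    a * t ≤ σ / r * t ^ r + (r - 1) / r * σ ^ (-(1 / (r - 1))) * a ^ (r / (r - 1)) := by
  have hr1 : (1:ℝ) < r := by linarith
  have hr0 : (0:ℝ) < r := by linarith
  have hrm1 : (0:ℝ) < r - 1 := by linarith
  have hpq : r.HolderConjugate (r / (r - 1)) := (Real.holderConjugate_iff_eq_conjExponent hr1).2 rfl
  have hA : (0:ℝ) ≤ σ ^ (1 / r) * t := mul_nonneg (Real.rpow_nonneg hσ.le _) ht
  have hB : (0:ℝ) ≤ a * σ ^ (-(1 / r)) := mul_nonneg ha (Real.rpow_nonneg hσ.le _)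
  have h := Real.young_inequality_of_nonneg hA hB hpq
  have hcancel : σ ^ (1 / r) * σ ^ (-(1 / r)) = 1 := by
    rw [← Real.rpow_add hσ]; simp
  have hAB : σ ^ (1 / r) * t * (a * σ ^ (-(1 / r))) = a * t := by
    calc σ ^ (1 / r) * t * (a * σ ^ (-(1 / r)))
        = (σ ^ (1 / r) * σ ^ (-(1 / r))) * (a * t) := by ring
      _ = a * t := by rw [hcancel]; ring
  have hAr : (σ ^ (1 / r) * t) ^ r = σ * t ^ r := by
    rw [Real.mul_rpow (Real.rpow_nonneg hσ.le _) ht, ← Real.rpow_mul hσ.le,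
      one_div_mul_cancel hr0.ne', Real.rpow_one]
  have hBq : (a * σ ^ (-(1 / r))) ^ (r / (r - 1))
      = a ^ (r / (r - 1)) * σ ^ (-(1 / (r - 1))) := by
    rw [Real.mul_rpow ha (Real.rpow_nonneg hσ.le _), ← Real.rpow_mul hσ.le]
    congr 1
    field_simp
  rw [hAB, hAr, hBq] at h
  have hq : a ^ (r / (r - 1)) * σ ^ (-(1 / (r - 1))) / (r / (r - 1))
      = (r - 1) / r * σ ^ (-(1 / (r - 1))) * a ^ (r / (r - 1)) := by
    field_simp
  rw [hq] at h
  have hrr : σ * t ^ r / r = σ / r * t ^ r := by ring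
  linarith

/-- **one-step mirror descent inequality.**
Let `φ : E → ℝ` be differentiable with gradient `φ'` and `(σ,r)`-uniformly
convex on a real inner product space `E`, and let the mirror step satisfy
`φ'(u) = φ'(w) − η • g` with `η > 0`.  Then, writing
`D_φ(a,b) = φ(a) − φ(b) − ⟪φ'(b), a − b⟫` for the Bregman divergence, for
every `x ∈ E`:
`D_φ(x,u) ≤ D_φ(x,w) − η⟪g, w − x⟫ + ((r−1)/r)·σ^(−1/(r−1))·(η‖g‖)^(r/(r−1))`. -/
theorem mirror_descent_one_step
    {E : Type*} [NormedAddCommGroup E] [InnerProductSpace ℝ E]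
    (σ r : ℝ) (hσ : 0 < σ) (hr : 2 ≤ r)
    (φ : E → ℝ) (φ' : E → E)
    (hdiff : ∀ x, HasFDerivAt φ (innerSL ℝ (φ' x)) x)
    (hUC : ∀ x y : E, φ y + ⟪φ' y, x - y⟫ + (σ / r) * ‖x - y‖ ^ r ≤ φ x)
    (η : ℝ) (hη : 0 < η) (g w u : E)
    (hstep : φ' u = φ' w - η • g) (x : E) :
    φ x - φ u - ⟪φ' u, x - u⟫
      ≤ (φ x - φ w - ⟪φ' w, x - w⟫) - η * ⟪g, w - x⟫
        + ((r - 1) / r) * σ ^ (-(1 / (r - 1))) * (η * ‖g‖) ^ (r / (r - 1)) := by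
  have huc := hUC u w
  have h1 : ⟪φ' u, x - u⟫ = ⟪φ' w, x - u⟫ - η * ⟪g, x - u⟫ := by
    rw [hstep, inner_sub_left, real_inner_smul_left]
  have e1 : ⟪φ' w, x - u⟫ = ⟪φ' w, x - w⟫ - ⟪φ' w, u - w⟫ := by
    rw [show x - u = (x - w) - (u - w) by abel, inner_sub_right]
  have e2 : ⟪g, x - u⟫ = ⟪g, w - u⟫ - ⟪g, w - x⟫ := by
    rw [show x - u = (w - u) - (w - x) by abel, inner_sub_right]
  have hCS : ⟪g, w - u⟫ ≤ ‖g‖ * ‖w - u‖ := real_inner_le_norm _ _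
  have hCS' : η * ⟪g, w - u⟫ ≤ η * ‖g‖ * ‖w - u‖ := by
    have := mul_le_mul_of_nonneg_left hCS hη.le
    linarith [this]
  have hkey : (η * ‖g‖) * ‖w - u‖
      ≤ σ / r * ‖u - w‖ ^ r
        + (r - 1) / r * σ ^ (-(1 / (r - 1))) * (η * ‖g‖) ^ (r / (r - 1)) := by
    rw [norm_sub_rev w u]
    exact young_aux σ r hσ hr _ _ (mul_nonneg hη.le (norm_nonneg _)) (norm_nonneg _)
  rw [h1, e1, e2]
  linarith
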